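/- For the qubit amplitude-decay model with parameters λ ∈ (0,1), a = √(1−λ), the system-output quantum Fisher information F(n) = 4 Σ_{(i_1,…,i_n) ∈ {0,1}^n} ‖ Σ_{j=1}^n K_{i_n}···K̇_{i_j}···K_{i_1} |0⟩ ‖² satisfies lim_{n→∞} F(n)/n = 8/(1−√(1−λ)). -/

import Mathlib

open scoped BigOperators Matrix ComplexConjugate Classical
open Matrix

noncomputable section

/-- Squared norm on `ι → ℂ`. -/
def nsq {ι : Type*} [Fintype ι] (v : ι → ℂ) : ℝ := ∑ i, Complex.normSq (v i)

/-- `A (n-1) ⋯ A j`. -/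
def kprodFrom {α : Type*} [Fintype α] [DecidableEq α] {n : ℕ} (A : Fin n → Matrix α α ℂ)
    (j : ℕ) : Matrix α α ℂ :=
  (((List.ofFn A).drop j).reverse).prod

/-- `A (j-1) ⋯ A 0`. -/
def kprodTo {α : Type*} [Fintype α] [DecidableEq α] {n : ℕ} (A : Fin n → Matrix α α ℂ)
    (j : ℕ) : Matrix α α ℂ :=
  (((List.ofFn A).take j).reverse).prod

/-- Kraus operators of the qubit amplitude-decay model at `θ0 = 0`:
`K 0 = |0⟩⟨0| + a|1⟩⟨1|`, `K 1 = b e^{iφ}|0⟩⟨1|`. -/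
def Kop (a b φ : ℝ) : Fin 2 → Matrix (Fin 2) (Fin 2) ℂ := fun i =>
  if i = 0 then !![1, 0; 0, (a : ℂ)]
  else !![0, (b : ℂ) * Complex.exp (Complex.I * φ); 0, 0]

/-- Their `θ`-derivatives at `θ0 = 0`: `K̇ 0 = i|1⟩⟨0| + i a|0⟩⟨1|`, `K̇ 1 = |1⟩⟨0|`. -/
def Kdop (a : ℝ) : Fin 2 → Matrix (Fin 2) (Fin 2) ℂ := fun i =>
  if i = 0 then !![0, Complex.I * (a : ℂ); Complex.I, 0]
  else !![0, 0; 1, 0]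

/-- The initial (stationary) system state `|0⟩`. -/
def e0 : Fin 2 → ℂ := fun i => if i = 0 then 1 else 0

/-- The system-output quantum Fisher information at `θ0 = 0`:
`F(n) = 4 ∑_𝐢 ‖∑ⱼ K_{iₙ}⋯K̇_{i_j}⋯K_{i_1}|0⟩‖²`. -/
def Fqfi (a b φ : ℝ) (n : ℕ) : ℝ :=
  4 * ∑ g : Fin n → Fin 2,
    nsq (∑ j : Fin n,
      (kprodFrom (fun l : Fin n => Kop a b φ (g l)) ((j : ℕ) + 1)
        * Kdop a (g j)
        * kprodTo (fun l : Fin n => Kop a b φ (g l)) (j : ℕ)).mulVec e0)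

/-! ### Auxiliary development -/

namespace QfiAux

/-- The derivative vector `∑ⱼ K_{g_{n-1}}⋯K̇_{g_j}⋯K_{g_0}|0⟩`. -/
def Kv (a b φ : ℝ) {n : ℕ} (g : Fin n → Fin 2) : Fin 2 → ℂ :=
  ∑ j : Fin n,
    (kprodFrom (fun l : Fin n => Kop a b φ (g l)) ((j : ℕ) + 1)
      * Kdop a (g j)
      * kprodTo (fun l : Fin n => Kop a b φ (g l)) (j : ℕ)).mulVec e0

/-- The propagated state `K_{g_{n-1}}⋯K_{g_0}|0⟩`. -/
def Wv (a b φ : ℝ) {n : ℕ} (g : Fin n → Fin 2) : Fin 2 → ℂ :=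
  (kprodTo (fun l : Fin n => Kop a b φ (g l)) n).mulVec e0

/-- The sequence `β` with `β₀ = 0`, `β_{k+1} = a β_k + 1`. -/
def bet (a : ℝ) : ℕ → ℝ
  | 0 => 0
  | n + 1 => a * bet a n + 1

lemma ofFn_snoc {α : Type*} {n : ℕ} (G : Fin n → α) (M : α) :
    List.ofFn (Fin.snoc G M) = List.ofFn G ++ [M] := by
  rw [List.ofFn_succ']
  simp [List.concat_eq_append]

lemma kprodFrom_snoc {α : Type*} [Fintype α] [DecidableEq α] {n : ℕ}
    (G : Fin n → Matrix α α ℂ) (M : Matrix α α ℂ) (j : ℕ) (hj : j ≤ n) :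
    kprodFrom (Fin.snoc G M) j = M * kprodFrom G j := by
  unfold kprodFrom
  rw [ofFn_snoc, List.drop_append_of_le_length (by simpa using hj)]
  simp

lemma kprodFrom_full {α : Type*} [Fintype α] [DecidableEq α] {n : ℕ}
    (G : Fin n → Matrix α α ℂ) :
    kprodFrom G n = 1 := by
  unfold kprodFrom
  rw [show List.drop n (List.ofFn G) = [] from by simp]
  simp

lemma kprodTo_snoc {α : Type*} [Fintype α] [DecidableEq α] {n : ℕ}
    (G : Fin n → Matrix α α ℂ) (M : Matrix α α ℂ) (j : ℕ) (hj : j ≤ n) :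
    kprodTo (Fin.snoc G M) j = kprodTo G j := by
  unfold kprodTo
  rw [ofFn_snoc, List.take_append_of_le_length (by simpa using hj)]

lemma kprodTo_snoc_succ {α : Type*} [Fintype α] [DecidableEq α] {n : ℕ}
    (G : Fin n → Matrix α α ℂ) (M : Matrix α α ℂ) :
    kprodTo (Fin.snoc G M) (n + 1) = M * kprodTo G n := by
  unfold kprodTo
  rw [ofFn_snoc, List.take_of_length_le (by simp), List.take_of_length_le (by simp)]
  simp

lemma fam_snoc (a b φ : ℝ) {n : ℕ} (g : Fin n → Fin 2) (i : Fin 2) :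
    (fun l : Fin (n + 1) => Kop a b φ ((Fin.snoc g i : Fin (n + 1) → Fin 2) l))
      = Fin.snoc (fun l : Fin n => Kop a b φ (g l)) (Kop a b φ i) := by
  funext l
  refine Fin.lastCases ?_ ?_ l <;> simp

lemma Wv_snoc (a b φ : ℝ) {n : ℕ} (g : Fin n → Fin 2) (i : Fin 2) :
    Wv a b φ (Fin.snoc g i) = (Kop a b φ i).mulVec (Wv a b φ g) := by
  unfold Wv
  rw [fam_snoc, kprodTo_snoc_succ, ← Matrix.mulVec_mulVec]

lemma Kv_snoc (a b φ : ℝ) {n : ℕ} (g : Fin n → Fin 2) (i : Fin 2) :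
    Kv a b φ (Fin.snoc g i)
      = (Kop a b φ i).mulVec (Kv a b φ g) + (Kdop a i).mulVec (Wv a b φ g) := by
  unfold Kv
  rw [fam_snoc, Fin.sum_univ_castSucc]
  congr 1
  · have hterm : ∀ j : Fin n,
        (kprodFrom (Fin.snoc (fun l : Fin n => Kop a b φ (g l)) (Kop a b φ i))
            (((j.castSucc : Fin (n+1)) : ℕ) + 1)
          * Kdop a ((Fin.snoc g i : Fin (n + 1) → Fin 2) j.castSucc)
          * kprodTo (Fin.snoc (fun l : Fin n => Kop a b φ (g l)) (Kop a b φ i))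
            ((j.castSucc : Fin (n+1)) : ℕ)).mulVec e0
        = (Kop a b φ i).mulVec
            ((kprodFrom (fun l : Fin n => Kop a b φ (g l)) ((j : ℕ) + 1)
              * Kdop a (g j)
              * kprodTo (fun l : Fin n => Kop a b φ (g l)) (j : ℕ)).mulVec e0) := by
      intro j
      rw [Fin.coe_castSucc, Fin.snoc_castSucc,
        kprodFrom_snoc _ _ _ (by omega), kprodTo_snoc _ _ _ (le_of_lt j.isLt),
        Matrix.mulVec_mulVec, mul_assoc (Kop a b φ i), mul_assoc (Kop a b φ i)]
    calc (∑ j : Fin n, _) = ∑ j : Fin n, (Kop a b φ i).mulVec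
          ((kprodFrom (fun l : Fin n => Kop a b φ (g l)) ((j : ℕ) + 1)
            * Kdop a (g j)
            * kprodTo (fun l : Fin n => Kop a b φ (g l)) (j : ℕ)).mulVec e0) :=
        Finset.sum_congr rfl (fun j _ => hterm j)
      _ = (Kop a b φ i).mulVec (Kv a b φ g) := by
        unfold Kv
        simp only [← Matrix.mulVecLin_apply]
        rw [← map_sum]
  · rw [Fin.val_last, Fin.snoc_last, kprodFrom_full, one_mul,
      kprodTo_snoc _ _ _ (le_refl n), ← Matrix.mulVec_mulVec]
    rfl

lemma forall_snoc_zero {n : ℕ} (g : Fin n → Fin 2) (i : Fin 2) :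
    (∀ l : Fin (n + 1), (Fin.snoc g i : Fin (n + 1) → Fin 2) l = 0)
      ↔ (∀ l, g l = 0) ∧ i = 0 := by
  constructor
  · intro h
    exact ⟨fun l => by simpa using h l.castSucc, by simpa using h (Fin.last n)⟩
  · rintro ⟨h1, h2⟩ l
    refine Fin.lastCases ?_ ?_ l <;> simp [h1, h2]

lemma Kop_zero_mulVec_e0 (a b φ : ℝ) : (Kop a b φ 0).mulVec e0 = e0 := by
  funext l
  fin_cases l <;>
    simp [Kop, e0, Matrix.mulVec, dotProduct, Fin.sum_univ_two]

lemma Kop_one_mulVec_e0 (a b φ : ℝ) : (Kop a b φ 1).mulVec e0 = 0 := by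
  funext l
  fin_cases l <;>
    simp [Kop, e0, Matrix.mulVec, dotProduct, Fin.sum_univ_two]

lemma Wv_zero (a b φ : ℝ) (g : Fin 0 → Fin 2) : Wv a b φ g = e0 := by
  unfold Wv kprodTo
  simp

lemma Wv_eq (a b φ : ℝ) : ∀ {n : ℕ} (g : Fin n → Fin 2),
    Wv a b φ g = if ∀ l, g l = 0 then e0 else 0 := by
  intro n
  induction n with
  | zero =>
    intro g
    rw [Wv_zero]
    simp [show ∀ l : Fin 0, g l = 0 from fun l => l.elim0]
  | succ n ih =>
    intro g
    have hg : g = Fin.snoc (Fin.init g) (g (Fin.last n)) := (Fin.snoc_init_self g).symm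
    rw [hg, Wv_snoc, ih]
    simp only [forall_snoc_zero]
    by_cases h2 : g (Fin.last n) = 0
    · by_cases h1 : ∀ l, Fin.init g l = 0
      · rw [if_pos h1, if_pos ⟨h1, h2⟩, h2, Kop_zero_mulVec_e0]
      · rw [if_neg h1, if_neg (fun h => h1 h.1), Matrix.mulVec_zero]
    · have h2' : g (Fin.last n) = 1 := by omega
      by_cases h1 : ∀ l, Fin.init g l = 0
      · rw [if_pos h1, if_neg (fun h => h2 h.2), h2', Kop_one_mulVec_e0]
      · rw [if_neg h1, if_neg (fun h => h1 h.1), Matrix.mulVec_zero]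

lemma snoc_zero_fun {n : ℕ} :
    (fun _ : Fin (n + 1) => (0 : Fin 2))
      = (Fin.snoc (fun _ : Fin n => (0 : Fin 2)) (0 : Fin 2) : Fin (n + 1) → Fin 2) := by
  funext l
  refine Fin.lastCases ?_ ?_ l <;> simp

lemma Kv_zero_fun (a b φ : ℝ) : ∀ n : ℕ,
    Kv a b φ (fun _ : Fin n => (0 : Fin 2)) = ![0, Complex.I * (bet a n : ℝ)] := by
  intro n
  induction n with
  | zero =>
    unfold Kv
    funext l
    fin_cases l <;> simp [bet]
  | succ n ih =>
    rw [snoc_zero_fun, Kv_snoc, ih, Wv_eq]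
    simp only [if_pos (fun l : Fin n => rfl)]
    funext l
    fin_cases l
    · simp [Kop, Kdop, e0, Matrix.mulVec, dotProduct, Fin.sum_univ_two, bet]
    · simp [Kop, Kdop, e0, Matrix.mulVec, dotProduct, Fin.sum_univ_two, bet]
      ring

lemma nsq_two (v : Fin 2 → ℂ) :
    nsq v = Complex.normSq (v 0) + Complex.normSq (v 1) := by
  simp [nsq, Fin.sum_univ_two]

lemma normSq_exp (φ : ℝ) : Complex.normSq (Complex.exp (Complex.I * φ)) = 1 := by
  rw [Complex.normSq_eq_norm_sq, Complex.norm_exp]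
  simp [Complex.mul_re]

lemma Kop_zero_mulVec (a b φ : ℝ) (x : Fin 2 → ℂ) :
    (Kop a b φ 0).mulVec x = ![x 0, (a : ℂ) * x 1] := by
  funext l
  fin_cases l <;> simp [Kop, Matrix.mulVec, dotProduct, Fin.sum_univ_two]

lemma Kop_one_mulVec (a b φ : ℝ) (x : Fin 2 → ℂ) :
    (Kop a b φ 1).mulVec x = ![(b : ℂ) * Complex.exp (Complex.I * φ) * x 1, 0] := by
  funext l
  fin_cases l <;> simp [Kop, Matrix.mulVec, dotProduct, Fin.sum_univ_two, mul_assoc]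

/-- The channel is trace preserving. -/
lemma nsq_K (a b φ : ℝ) (hab : a ^ 2 + b ^ 2 = 1) (x : Fin 2 → ℂ) :
    ∑ i : Fin 2, nsq ((Kop a b φ i).mulVec x) = nsq x := by
  rw [Fin.sum_univ_two, Kop_zero_mulVec, Kop_one_mulVec, nsq_two, nsq_two, nsq_two]
  simp only [Matrix.cons_val_zero, Matrix.cons_val_one, Matrix.head_cons,
    Complex.normSq_mul, Complex.normSq_ofReal, normSq_exp, Complex.normSq_zero]
  nlinarith [Complex.normSq_nonneg (x 1)]

lemma Kdop_zero_mulVec_e0 (a : ℝ) : (Kdop a 0).mulVec e0 = ![0, Complex.I] := by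
  funext l
  fin_cases l <;> simp [Kdop, e0, Matrix.mulVec, dotProduct, Fin.sum_univ_two]

lemma Kdop_one_mulVec_e0 (a : ℝ) : (Kdop a 1).mulVec e0 = ![0, 1] := by
  funext l
  fin_cases l <;> simp [Kdop, e0, Matrix.mulVec, dotProduct, Fin.sum_univ_two]

lemma nsq_special (a b φ : ℝ) (hab : a ^ 2 + b ^ 2 = 1) (β : ℝ) :
    ∑ i : Fin 2, nsq ((Kop a b φ i).mulVec ![0, Complex.I * (β : ℝ)]
        + (Kdop a i).mulVec e0)
      = β ^ 2 + (2 + 2 * a * β) := by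
  rw [Fin.sum_univ_two, Kop_zero_mulVec, Kop_one_mulVec,
    Kdop_zero_mulVec_e0, Kdop_one_mulVec_e0]
  have h0 : (![(0 : ℂ), Complex.I * (β : ℝ)] 0) = 0 := rfl
  have h1 : (![(0 : ℂ), Complex.I * (β : ℝ)] 1) = Complex.I * (β : ℝ) := rfl
  rw [nsq_two, nsq_two]
  simp only [h0, h1, Pi.add_apply, Matrix.cons_val_zero, Matrix.cons_val_one,
    Matrix.head_cons, zero_add, add_zero]
  have e1 : (a : ℂ) * (Complex.I * (β : ℝ)) + Complex.I
      = Complex.I * ((a * β + 1 : ℝ) : ℂ) := by push_cast; ring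
  simp only [e1, Complex.normSq_mul, Complex.normSq_I, Complex.normSq_ofReal, normSq_exp,
    Complex.normSq_zero, Complex.normSq_one]
  linear_combination β ^ 2 * hab

lemma nsq_beta (β : ℝ) : nsq ![0, Complex.I * (β : ℝ)] = β ^ 2 := by
  rw [nsq_two]
  have h0 : (![(0 : ℂ), Complex.I * (β : ℝ)] 0) = 0 := rfl
  have h1 : (![(0 : ℂ), Complex.I * (β : ℝ)] 1) = Complex.I * (β : ℝ) := rfl
  rw [h0, h1]
  simp only [Complex.normSq_mul, Complex.normSq_I, Complex.normSq_ofReal,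
    Complex.normSq_zero]
  ring

lemma sum_step (a b φ : ℝ) (hab : a ^ 2 + b ^ 2 = 1) (n : ℕ) :
    ∑ g : Fin (n + 1) → Fin 2, nsq (Kv a b φ g)
      = (∑ g : Fin n → Fin 2, nsq (Kv a b φ g)) + (2 + 2 * a * bet a n) := by
  rw [← Equiv.sum_comp (Fin.snocEquiv (fun _ => Fin 2)) (fun g => nsq (Kv a b φ g)),
    Fintype.sum_prod_type]
  have hfun : ∀ (i : Fin 2) (g : Fin n → Fin 2),
      nsq (Kv a b φ ((Fin.snocEquiv (fun _ => Fin 2)) (i, g)))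
        = nsq ((Kop a b φ i).mulVec (Kv a b φ g) + (Kdop a i).mulVec (Wv a b φ g)) := by
    intro i g
    rw [show ((Fin.snocEquiv (fun _ => Fin 2)) (i, g)) = Fin.snoc g i from rfl, Kv_snoc]
  simp only [hfun]
  rw [Finset.sum_comm]
  have key : ∀ g : Fin n → Fin 2,
      (∑ i : Fin 2, nsq ((Kop a b φ i).mulVec (Kv a b φ g)
          + (Kdop a i).mulVec (Wv a b φ g)))
        = nsq (Kv a b φ g) + (if g = (fun _ => 0) then (2 + 2 * a * bet a n) else 0) := by
    intro g
    by_cases h : ∀ l, g l = 0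
    · have hge : g = fun _ => 0 := funext h
      rw [if_pos hge, Wv_eq, if_pos h, hge, Kv_zero_fun]
      rw [nsq_special a b φ hab, nsq_beta]
    · have hge : ¬ g = (fun _ => 0) := by
        intro hc; exact h (fun l => by rw [hc])
      rw [if_neg hge, Wv_eq, if_neg h]
      simp only [Matrix.mulVec_zero, add_zero]
      rw [nsq_K a b φ hab]
  rw [Finset.sum_congr rfl (fun g _ => key g), Finset.sum_add_distrib,
    Finset.sum_ite_eq' Finset.univ (fun _ => (0 : Fin 2))
      (fun _ => (2 + 2 * a * bet a n)), if_pos (Finset.mem_univ _)]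

lemma Fqfi_eq_sum (a b φ : ℝ) (n : ℕ) :
    Fqfi a b φ n = 4 * ∑ g : Fin n → Fin 2, nsq (Kv a b φ g) := rfl

lemma Fqfi_closed (a b φ : ℝ) (hab : a ^ 2 + b ^ 2 = 1) (n : ℕ) :
    Fqfi a b φ n = ∑ k ∈ Finset.range n, (8 + 8 * a * bet a k) := by
  induction n with
  | zero => simp [Fqfi_eq_sum, Kv, nsq]
  | succ n ih =>
    rw [Fqfi_eq_sum, sum_step a b φ hab n, Finset.sum_range_succ, mul_add]
    rw [Fqfi_eq_sum] at ih
    rw [ih]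
    ring

lemma bet_closed (a : ℝ) (ha : a ≠ 1) (n : ℕ) :
    bet a n = (1 - a ^ n) / (1 - a) := by
  induction n with
  | zero => simp [bet]
  | succ n ih =>
    have h1 : (1 : ℝ) - a ≠ 0 := sub_ne_zero.mpr (Ne.symm ha)
    rw [bet, ih]
    field_simp
    ring

end QfiAux

/-- the quantum Fisher information rate: `lim_{n→∞} F(n)/n = 8/(1-√(1-λ))`. -/
theorem qfi_rate
    (lam : ℝ) (hlam0 : 0 < lam) (hlam1 : lam < 1)
    (a b φ : ℝ) (ha : a = Real.sqrt (1 - lam)) (hb : b = Real.sqrt lam) :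
    Filter.Tendsto (fun n : ℕ => Fqfi a b φ n / n) Filter.atTop
      (nhds (8 / (1 - Real.sqrt (1 - lam)))) := by
  have ha2 : a ^ 2 = 1 - lam := by rw [ha]; exact Real.sq_sqrt (by linarith)
  have hb2 : b ^ 2 = lam := by rw [hb]; exact Real.sq_sqrt (le_of_lt hlam0)
  have hab : a ^ 2 + b ^ 2 = 1 := by rw [ha2, hb2]; ring
  have ha0 : 0 ≤ a := by rw [ha]; exact Real.sqrt_nonneg _
  have ha1 : a < 1 := by nlinarith
  have hane : a ≠ 1 := ne_of_lt ha1
  have h1a : (1 : ℝ) - a ≠ 0 := sub_ne_zero.mpr (Ne.symm hane)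
  -- the summand tends to `8 + 8a/(1-a) = 8/(1-a)`
  have hbet : Filter.Tendsto (fun k : ℕ => QfiAux.bet a k) Filter.atTop
      (nhds (1 / (1 - a))) := by
    have hpow : Filter.Tendsto (fun k : ℕ => a ^ k) Filter.atTop (nhds 0) :=
      tendsto_pow_atTop_nhds_zero_of_lt_one ha0 ha1
    have : Filter.Tendsto (fun k : ℕ => (1 - a ^ k) / (1 - a)) Filter.atTop
        (nhds ((1 - 0) / (1 - a))) :=
      ((tendsto_const_nhds.sub hpow).div_const _)
    simpa [QfiAux.bet_closed a hane] using this
  have hu : Filter.Tendsto (fun k : ℕ => 8 + 8 * a * QfiAux.bet a k) Filter.atTop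
      (nhds (8 / (1 - a))) := by
    have : Filter.Tendsto (fun k : ℕ => 8 + 8 * a * QfiAux.bet a k) Filter.atTop
        (nhds (8 + 8 * a * (1 / (1 - a)))) :=
      tendsto_const_nhds.add ((tendsto_const_nhds.mul hbet))
    have heq : 8 + 8 * a * (1 / (1 - a)) = 8 / (1 - a) := by
      field_simp
      ring
    rwa [heq] at this
  have hc := hu.cesaro
  have hfinal : Filter.Tendsto (fun n : ℕ => Fqfi a b φ n / n) Filter.atTop
      (nhds (8 / (1 - a))) := by
    have heq : ∀ n : ℕ, Fqfi a b φ n / n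
        = (n : ℝ)⁻¹ * ∑ k ∈ Finset.range n, (8 + 8 * a * QfiAux.bet a k) := by
      intro n
      rw [QfiAux.Fqfi_closed a b φ hab n, div_eq_inv_mul]
    simpa only [heq] using hc
  rwa [← ha]
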